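/- Suppose a two-outcome projective measurement applied to a mixed quantum state ρ yields outcome 0 with probability 1 − ε. Then the post-measurement state ρ̃ (conditioned on outcome 0, i.e. PρP/tr(PρP) for the corresponding projector P) satisfies ‖ρ̃ − ρ‖_tr ≤ √ε. -/

import Mathlib

open scoped ComplexOrder

open Matrix
section aux
variable {n : ℕ}

lemma trace_mul_conjTranspose_eq (M N : Matrix (Fin n) (Fin n) ℂ) :
    (M * Nᴴ).trace = ∑ i, ∑ j, M i j * (starRingEnd ℂ) (N i j) := by
  simp [Matrix.trace, Matrix.mul_apply, Matrix.conjTranspose_apply, Matrix.diag]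

lemma trace_mul_conjTranspose_self_re (M : Matrix (Fin n) (Fin n) ℂ) :
    (M * Mᴴ).trace.re = ∑ i, ∑ j, Complex.normSq (M i j) := by
  rw [trace_mul_conjTranspose_eq]
  simp [Complex.mul_conj, ← Complex.ofReal_sum]

lemma abs_trace_mul_conjTranspose_le (M N : Matrix (Fin n) (Fin n) ℂ) :
    ‖(M * Nᴴ).trace‖ ≤
      Real.sqrt ((M * Mᴴ).trace.re) * Real.sqrt ((N * Nᴴ).trace.re) := by
  rw [trace_mul_conjTranspose_eq, trace_mul_conjTranspose_self_re,
    trace_mul_conjTranspose_self_re]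
  calc ‖∑ i, ∑ j, M i j * (starRingEnd ℂ) (N i j)‖
      ≤ ∑ i, ∑ j, ‖M i j * (starRingEnd ℂ) (N i j)‖ := by
        refine (norm_sum_le _ _).trans ?_
        exact Finset.sum_le_sum fun i _ => norm_sum_le _ _
    _ = ∑ p : Fin n × Fin n, ‖M p.1 p.2‖ * ‖N p.1 p.2‖ := by
        simp [Fintype.sum_prod_type, _root_.map_mul]
    _ ≤ Real.sqrt (∑ p : Fin n × Fin n, ‖M p.1 p.2‖ ^ 2) *
        Real.sqrt (∑ p : Fin n × Fin n, ‖N p.1 p.2‖ ^ 2) :=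
        Real.sum_mul_le_sqrt_mul_sqrt _ _ _
    _ = Real.sqrt (∑ i, ∑ j, Complex.normSq (M i j)) *
        Real.sqrt (∑ i, ∑ j, Complex.normSq (N i j)) := by
        simp [Fintype.sum_prod_type, Complex.sq_norm]

end aux

theorem stmt_1 (n : ℕ) (ρ P : Matrix (Fin n) (Fin n) ℂ)
    (hρ : ρ.PosSemidef) (htr : ρ.trace = 1)
    (hP : P.IsHermitian) (hproj : P * P = P)
    (ε : ℝ) (hε0 : 0 ≤ ε) (hε1 : ε < 1)
    (hprob : (P * ρ).trace = ((1 - ε : ℝ) : ℂ))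
    (ρt : Matrix (Fin n) (Fin n) ℂ)
    (hρt : ρt = ((P * ρ * P).trace)⁻¹ • (P * ρ * P))
    (hD : (ρt - ρ).IsHermitian) :
    (∑ i, |hD.eigenvalues i|) / 2 ≤ Real.sqrt ε := by
  have h1ε : (0:ℝ) < 1 - ε := by linarith
  set s : ℝ := Real.sqrt (1 - ε) with hs
  have hs0 : 0 < s := Real.sqrt_pos.mpr h1ε
  have hss : s * s = 1 - ε := Real.mul_self_sqrt h1ε.le
  have hs1 : s ≤ 1 := by nlinarith
  set c : ℝ := s⁻¹ with hc
  have hc1 : c * (1 - ε) = s := by rw [hc, ← hss]; field_simp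
  have hc2 : c * c * (1 - ε) = 1 := by rw [hc, ← hss]; field_simp
  have hcc : c * c = (1 - ε)⁻¹ := by rw [hc, ← mul_inv, hss]
  -- trace of P ρ P
  have htrP : (P * ρ * P).trace = ((1 - ε : ℝ) : ℂ) := by
    rw [Matrix.trace_mul_cycle, hproj, hprob]
  -- square root of ρ
  have hex : ∃ R : Matrix (Fin n) (Fin n) ℂ, Rᴴ = R ∧ R * R = ρ := by
    open scoped MatrixOrder in
    exact ⟨CFC.sqrt ρ, (CFC.sqrt_nonneg ρ).posSemidef.1, CFC.sqrt_mul_sqrt_self ρ hρ.nonneg⟩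
  set R : Matrix (Fin n) (Fin n) ℂ := hex.choose with hRdef
  have hRH : Rᴴ = R := hex.choose_spec.1
  have hRR : R * R = ρ := hex.choose_spec.2
  set k : ℂ := (c : ℂ) with hk
  set X : Matrix (Fin n) (Fin n) ℂ := k • (P * R) with hX
  set Y : Matrix (Fin n) (Fin n) ℂ := R with hY
  have hkstar : star k = k := by rw [hk]; exact Complex.conj_ofReal c
  have hXH : Xᴴ = k • (R * P) := by
    rw [hX, Matrix.conjTranspose_smul, hkstar, Matrix.conjTranspose_mul, hRH, hP.eq]
  have hYH : Yᴴ = R := hRH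
  -- products
  have hPRRP : (P * R) * (R * P) = P * ρ * P := by
    rw [Matrix.mul_assoc, ← Matrix.mul_assoc R R P, hRR, ← Matrix.mul_assoc]
  have hPRR : (P * R) * R = P * ρ := by rw [Matrix.mul_assoc, hRR]
  have hRRP : R * (R * P) = ρ * P := by rw [← Matrix.mul_assoc, hRR]
  -- trace values
  have hT2 : ((P * R) * R).trace = ((1 - ε : ℝ) : ℂ) := by rw [hPRR, hprob]
  have hT3 : (R * (R * P)).trace = ((1 - ε : ℝ) : ℂ) := by
    rw [hRRP, Matrix.trace_mul_comm, hprob]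
  -- ρt and the difference
  have hXXH : X * Xᴴ = (k * k) • (P * ρ * P) := by
    rw [hX, hXH, Matrix.smul_mul, Matrix.mul_smul, smul_smul, hPRRP]
  have hYYH : Y * Yᴴ = ρ := by rw [hY, hYH, hRR]
  have hρt' : ρt = (k * k) • (P * ρ * P) := by
    rw [hρt, htrP, hk, ← Complex.ofReal_mul, hcc, Complex.ofReal_inv]
  have hD_eq : ρt - ρ = X * Xᴴ - Y * Yᴴ := by rw [hXXH, hYYH, hρt']
  set A : Matrix (Fin n) (Fin n) ℂ := X - Y with hA
  set B : Matrix (Fin n) (Fin n) ℂ := X + Y with hB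
  have hABBA : A * Bᴴ + B * Aᴴ = (2:ℂ) • (ρt - ρ) := by
    rw [hA, hB, hD_eq, Matrix.conjTranspose_sub, Matrix.conjTranspose_add, two_smul]
    noncomm_ring
  -- trace values for X, Y products
  have hXXt : (X * Xᴴ).trace = 1 := by
    rw [hXXH, Matrix.trace_smul, htrP, smul_eq_mul, hk, ← Complex.ofReal_mul,
      ← Complex.ofReal_mul, hc2, Complex.ofReal_one]
  have hXYt : (X * Yᴴ).trace = ((s : ℝ) : ℂ) := by
    rw [show X * Yᴴ = k • ((P * R) * R) from by rw [hX, hYH, Matrix.smul_mul],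
      Matrix.trace_smul, hT2, smul_eq_mul, hk, ← Complex.ofReal_mul, hc1]
  have hYXt : (Y * Xᴴ).trace = ((s : ℝ) : ℂ) := by
    rw [show Y * Xᴴ = k • (R * (R * P)) from by rw [hY, hXH, Matrix.mul_smul],
      Matrix.trace_smul, hT3, smul_eq_mul, hk, ← Complex.ofReal_mul, hc1]
  have hYYt : (Y * Yᴴ).trace = 1 := by rw [hYYH, htr]
  have hAA : (A * Aᴴ).trace = ((2 - 2*s : ℝ) : ℂ) := by
    rw [hA, Matrix.conjTranspose_sub, Matrix.sub_mul, Matrix.mul_sub, Matrix.mul_sub,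
      Matrix.trace_sub, Matrix.trace_sub, Matrix.trace_sub, hXXt, hXYt, hYXt, hYYt]
    push_cast; ring
  have hBB : (B * Bᴴ).trace = ((2 + 2*s : ℝ) : ℂ) := by
    rw [hB, Matrix.conjTranspose_add, Matrix.add_mul, Matrix.mul_add, Matrix.mul_add,
      Matrix.trace_add, Matrix.trace_add, Matrix.trace_add, hXXt, hXYt, hYXt, hYYt]
    push_cast; ring
  -- spectral decomposition of the difference
  set U : Matrix (Fin n) (Fin n) ℂ := (hD.eigenvectorUnitary : Matrix (Fin n) (Fin n) ℂ)
    with hUdef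
  have hUU : Uᴴ * U = 1 := by
    rw [← Matrix.star_eq_conjTranspose]
    exact Unitary.coe_star_mul_self hD.eigenvectorUnitary
  have hUU' : U * Uᴴ = 1 := by
    rw [← Matrix.star_eq_conjTranspose]
    exact Unitary.coe_mul_star_self hD.eigenvectorUnitary
  have hspec : ρt - ρ = U * Matrix.diagonal (fun i => ((hD.eigenvalues i : ℝ) : ℂ)) * Uᴴ := by
    rw [hUdef, ← Matrix.star_eq_conjTranspose]
    exact hD.spectral_theorem
  set g : Fin n → ℂ := fun i => if 0 ≤ hD.eigenvalues i then 1 else -1 with hg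
  have hgg : ∀ i, g i * g i = 1 := by
    intro i; rw [hg]; by_cases h : 0 ≤ hD.eigenvalues i <;> simp [h]
  set S : Matrix (Fin n) (Fin n) ℂ := U * Matrix.diagonal g * Uᴴ with hSdef
  have hSH : Sᴴ = S := by
    rw [hSdef, Matrix.conjTranspose_mul, Matrix.conjTranspose_mul,
      Matrix.conjTranspose_conjTranspose, Matrix.diagonal_conjTranspose]
    have : star g = g := by
      funext i; rw [hg]; by_cases h : 0 ≤ hD.eigenvalues i <;> simp [h]
    rw [this, Matrix.mul_assoc]
  have hS_middle : ∀ M : Matrix (Fin n) (Fin n) ℂ,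
      S * (U * M * Uᴴ) = U * (Matrix.diagonal g * M) * Uᴴ := by
    intro M
    rw [hSdef]
    simp only [Matrix.mul_assoc]
    rw [← Matrix.mul_assoc Uᴴ U (M * Uᴴ), hUU, Matrix.one_mul]
  have htrU : ∀ M : Matrix (Fin n) (Fin n) ℂ, (U * M * Uᴴ).trace = M.trace := by
    intro M
    rw [Matrix.trace_mul_cycle, hUU, Matrix.one_mul]
  have hSD : (S * (ρt - ρ)).trace = ((∑ i, |hD.eigenvalues i| : ℝ) : ℂ) := by
    conv_lhs => rw [hspec]
    rw [hS_middle, htrU, Matrix.diagonal_mul_diagonal, Matrix.trace_diagonal]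
    rw [Complex.ofReal_sum]
    refine Finset.sum_congr rfl fun i _ => ?_
    rw [hg]
    by_cases h : 0 ≤ hD.eigenvalues i
    · simp [h, abs_of_nonneg h]
    · push_neg at h
      simp [h.not_ge, abs_of_neg h]
  have hSS : S * S = 1 := by
    nth_rewrite 2 [hSdef]
    rw [hS_middle, Matrix.diagonal_mul_diagonal]
    have hdg : Matrix.diagonal (fun i => g i * g i) = 1 := by simp [hgg]
    rw [hdg, Matrix.mul_one, hUU']
  set t : ℂ := ((S * A) * Bᴴ).trace with ht
  have hfrob : ((S * A) * (S * A)ᴴ).trace = (A * Aᴴ).trace := by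
    rw [Matrix.conjTranspose_mul, hSH, Matrix.trace_mul_comm]
    rw [Matrix.mul_assoc Aᴴ S (S * A), ← Matrix.mul_assoc S S A, hSS, Matrix.one_mul,
      Matrix.trace_mul_comm]
  have hhalf : ρt - ρ = (2⁻¹ : ℂ) • (A * Bᴴ + B * Aᴴ) := by
    rw [hABBA, smul_smul]; norm_num
  have hSAB : (S * (A * Bᴴ)).trace = t := by rw [ht, Matrix.mul_assoc S A Bᴴ]
  have hSBA : (S * (B * Aᴴ)).trace = star t := by
    have h1 : (S * (B * Aᴴ))ᴴ = (A * Bᴴ) * S := by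
      rw [Matrix.conjTranspose_mul, Matrix.conjTranspose_mul,
        Matrix.conjTranspose_conjTranspose, hSH]
    have h2 : ((A * Bᴴ) * S).trace = t := by
      rw [Matrix.trace_mul_comm, ht, Matrix.mul_assoc S A Bᴴ]
    have h3 := Matrix.trace_conjTranspose (S * (B * Aᴴ))
    rw [h1, h2] at h3
    have h4 := congrArg star h3
    rw [star_star] at h4
    exact h4.symm
  have hsum : ((∑ i, |hD.eigenvalues i| : ℝ) : ℂ) = ((t.re : ℝ) : ℂ) := by
    rw [← hSD, hhalf, Matrix.mul_smul, Matrix.trace_smul, Matrix.mul_add, Matrix.trace_add,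
      hSAB, hSBA, smul_eq_mul, Complex.star_def, Complex.add_conj]
    push_cast
    ring
  have hsumr : ∑ i, |hD.eigenvalues i| = t.re := by exact_mod_cast hsum
  have h1 : t.re ≤ ‖t‖ := Complex.re_le_norm t
  have h2 := abs_trace_mul_conjTranspose_le (S * A) B
  rw [← ht, hfrob, hAA, hBB] at h2
  simp only [Complex.ofReal_re] at h2
  have h3 : Real.sqrt (2 - 2*s) * Real.sqrt (2 + 2*s) = 2 * Real.sqrt ε := by
    rw [← Real.sqrt_mul (by linarith)]
    rw [show (2 - 2*s) * (2 + 2*s) = 2^2 * ε by nlinarith]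
    rw [Real.sqrt_mul (by positivity), Real.sqrt_sq (by norm_num)]
  rw [h3] at h2
  linarith
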